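/- Let P ⊂ ℝ² be a separated set with |P| = n, and let t, C be real numbers with 1 ≤ t ≤ C. Then the number of unordered pairs {p,q} of distinct points of P with dist(p,q) ∈ [t, t+1] is at most 8(2C+1)·n. -/

import Mathlib

open Metric MeasureTheory Real Set
open scoped Classical ENNReal

lemma vol_ball2 (x : EuclideanSpace ℝ (Fin 2)) (r : ℝ) (hr : 0 ≤ r) :
    volume (ball x r) = ENNReal.ofReal (r ^ 2 * π) := by
  rw [EuclideanSpace.volume_ball]
  simp only [Fintype.card_fin]
  rw [Real.sq_sqrt pi_pos.le]
  norm_num [Real.Gamma_two]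
  rw [← ENNReal.ofReal_pow hr, ← ENNReal.ofReal_mul (by positivity)]

lemma vol_closedBall2 (x : EuclideanSpace ℝ (Fin 2)) (r : ℝ) (hr : 0 ≤ r) :
    volume (closedBall x r) = ENNReal.ofReal (r ^ 2 * π) := by
  rw [EuclideanSpace.volume_closedBall]
  simp only [Fintype.card_fin]
  rw [Real.sq_sqrt pi_pos.le]
  norm_num [Real.Gamma_two]
  rw [← ENNReal.ofReal_pow hr, ← ENNReal.ofReal_mul (by positivity)]

lemma packing (P : Finset (EuclideanSpace ℝ (Fin 2)))
    (hsep : ∀ p ∈ P, ∀ q ∈ P, p ≠ q → 1 ≤ dist p q)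
    (t : ℝ) (ht : 1 ≤ t) (p : EuclideanSpace ℝ (Fin 2)) :
    ((P.filter fun q => q ≠ p ∧ dist p q ∈ Set.Icc t (t + 1)).card : ℝ) ≤ 8 * (2 * t + 1) := by
  set N := P.filter fun q => q ≠ p ∧ dist p q ∈ Set.Icc t (t + 1) with hN
  -- balls of radius 1/2 around points of N
  have hsub : ∀ q ∈ N, ball q (1/2) ⊆ ball p (t + 3/2) \ closedBall p (t - 1/2) := by
    intro q hq x hx
    simp only [hN, Finset.mem_filter] at hq
    obtain ⟨hqP, hqp, hd1, hd2⟩ := hq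
    simp only [mem_ball] at hx
    constructor
    · simp only [mem_ball]
      calc dist x p ≤ dist x q + dist q p := dist_triangle _ _ _
        _ < 1/2 + (t + 1) := by rw [dist_comm q p]; linarith
        _ = t + 3/2 := by ring
    · simp only [mem_closedBall, not_le]
      have h3 : dist p q ≤ dist p x + dist q x := by
        rw [dist_comm q x]; exact dist_triangle p x q
      have h4 := dist_comm x p
      have h5 := dist_comm x q
      linarith
  have hdisj : (N : Set (EuclideanSpace ℝ (Fin 2))).PairwiseDisjoint (fun q => ball q (1/2)) := by
    intro a ha b hb hab
    apply ball_disjoint_ball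
    simp only [hN, Finset.coe_filter, Set.mem_setOf_eq] at ha hb
    have := hsep a ha.1 b hb.1 hab
    linarith
  have hmeas : volume (⋃ q ∈ N, ball q (1/2)) = ∑ q ∈ N, volume (ball q (1/2)) :=
    measure_biUnion_finset hdisj (fun _ _ => measurableSet_ball)
  have hdisj2 : Disjoint (⋃ q ∈ N, ball q (1/2)) (closedBall p (t - 1/2)) := by
    rw [Set.disjoint_left]
    intro x hx
    simp only [Set.mem_iUnion] at hx
    obtain ⟨q, hq, hxq⟩ := hx
    exact (hsub q hq hxq).2
  have hunion : volume (⋃ q ∈ N, ball q (1/2)) + volume (closedBall p (t - 1/2))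
      ≤ volume (ball p (t + 3/2)) := by
    rw [← measure_union hdisj2 measurableSet_closedBall]
    apply measure_mono
    apply Set.union_subset
    · exact Set.iUnion₂_subset fun q hq => (hsub q hq).trans Set.diff_subset
    · exact closedBall_subset_ball (by linarith)
  rw [hmeas] at hunion
  have hball : ∀ q ∈ N, volume (ball q (1/2)) = ENNReal.ofReal ((1/2)^2 * π) := by
    intro q _; exact vol_ball2 q (1/2) (by norm_num)
  rw [Finset.sum_congr rfl hball, Finset.sum_const, nsmul_eq_mul,
    vol_closedBall2 p _ (by linarith), vol_ball2 p _ (by linarith)] at hunion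
  have key : (N.card : ℝ) * ((1/2)^2 * π) + (t - 1/2)^2 * π ≤ (t + 3/2)^2 * π := by
    have h1 : ((N.card : ℝ≥0∞)) = ENNReal.ofReal (N.card : ℝ) := by
      simp
    rw [h1, ← ENNReal.ofReal_mul (by positivity), ← ENNReal.ofReal_add (by positivity)
      (by positivity)] at hunion
    exact (ENNReal.ofReal_le_ofReal_iff (by positivity)).mp hunion
  nlinarith [pi_pos, N.card.cast_nonneg (α := ℝ)]

/-- The number of unordered pairs `{p, q}` of distinct points of the finite set `P ⊂ ℝ²`
whose Euclidean distance lies in the set `S ⊆ ℝ`. -/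
noncomputable def nearPairs (P : Finset (EuclideanSpace ℝ (Fin 2))) (S : Set ℝ) : ℕ :=
  Set.ncard {e : Sym2 (EuclideanSpace ℝ (Fin 2)) |
    ¬ e.IsDiag ∧ (∀ p ∈ e, p ∈ P) ∧
      Sym2.lift ⟨fun p q => dist p q, fun _ _ => dist_comm _ _⟩ e ∈ S}

theorem bounded_distance_pairs (P : Finset (EuclideanSpace ℝ (Fin 2))) (n : ℕ)
    (hcard : P.card = n)
    (hsep : ∀ p ∈ P, ∀ q ∈ P, p ≠ q → 1 ≤ dist p q)
    (t C : ℝ) (ht : 1 ≤ t) (htC : t ≤ C) :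
    (nearPairs P (Set.Icc t (t + 1)) : ℝ) ≤ 8 * (2 * C + 1) * n := by
  classical
  set F := (P ×ˢ P).filter (fun z => z.1 ≠ z.2 ∧ dist z.1 z.2 ∈ Set.Icc t (t + 1)) with hF
  have hsub : {e : Sym2 (EuclideanSpace ℝ (Fin 2)) |
      ¬ e.IsDiag ∧ (∀ p ∈ e, p ∈ P) ∧
        Sym2.lift ⟨fun p q => dist p q, fun _ _ => dist_comm _ _⟩ e ∈ Set.Icc t (t + 1)}
      ⊆ ↑(F.image Sym2.mk.uncurry) := by
    intro e he
    induction e using Sym2.ind with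
    | _ a b =>
      obtain ⟨hdiag, hmem, hdist⟩ := he
      simp only [Sym2.lift_mk] at hdist
      rw [Sym2.mk_isDiag_iff] at hdiag
      refine Finset.mem_coe.mpr (Finset.mem_image.mpr ⟨(a, b), ?_, rfl⟩)
      simp only [hF, Finset.mem_filter, Finset.mem_product]
      exact ⟨⟨hmem a (Sym2.mem_mk_left a b), hmem b (Sym2.mem_mk_right a b)⟩, hdiag, hdist⟩
  have h1 : nearPairs P (Set.Icc t (t + 1)) ≤ F.card := by
    calc nearPairs P (Set.Icc t (t + 1))
        ≤ (↑(F.image Sym2.mk.uncurry) : Set (Sym2 (EuclideanSpace ℝ (Fin 2)))).ncard :=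
          Set.ncard_le_ncard hsub (Finset.finite_toSet _)
      _ = (F.image Sym2.mk.uncurry).card := Set.ncard_coe_finset _
      _ ≤ F.card := Finset.card_image_le
  have h2 : F ⊆ P.biUnion (fun p => (P.filter fun q => q ≠ p ∧ dist p q ∈ Set.Icc t (t + 1)).image
      (fun q => (p, q))) := by
    intro z hz
    simp only [hF, Finset.mem_filter, Finset.mem_product] at hz
    obtain ⟨⟨ha, hb⟩, hne, hd⟩ := hz
    refine Finset.mem_biUnion.mpr ⟨z.1, ha, Finset.mem_image.mpr ⟨z.2, ?_, rfl⟩⟩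
    exact Finset.mem_filter.mpr ⟨hb, fun h => hne h.symm, hd⟩
  have h3 : (F.card : ℝ) ≤ ∑ p ∈ P, ((P.filter fun q => q ≠ p ∧ dist p q ∈ Set.Icc t (t + 1)).card : ℝ) := by
    have := (Finset.card_le_card h2).trans Finset.card_biUnion_le
    calc (F.card : ℝ) ≤ _ := Nat.cast_le.mpr this
      _ ≤ _ := by
        push_cast
        apply Finset.sum_le_sum
        intro p _
        exact_mod_cast Finset.card_image_le
  have h4 : (F.card : ℝ) ≤ P.card * (8 * (2 * t + 1)) := by
    refine h3.trans ?_
    calc ∑ p ∈ P, ((P.filter fun q => q ≠ p ∧ dist p q ∈ Set.Icc t (t + 1)).card : ℝ)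
        ≤ ∑ _p ∈ P, (8 * (2 * t + 1) : ℝ) :=
          Finset.sum_le_sum fun p _ => packing P hsep t ht p
      _ = P.card * (8 * (2 * t + 1)) := by rw [Finset.sum_const, nsmul_eq_mul]
  calc (nearPairs P (Set.Icc t (t + 1)) : ℝ) ≤ F.card := Nat.cast_le.mpr h1
    _ ≤ P.card * (8 * (2 * t + 1)) := h4
    _ ≤ 8 * (2 * C + 1) * n := by
        rw [hcard]
        have : (0:ℝ) ≤ n := Nat.cast_nonneg n
        nlinarith
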